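/- Let m ≥ 2, M a set with |M| = m+1, a ≠ b in M, and F ⊆ { {a,b}, M∖{a}, M∖{b} }. Then there exists a surjective pp-morphism from the reduced poset P(M,F) onto the poset B with one bottom element and m maximal elements, defined by collapsing {a} and {b} to a single maximal point, mapping the remaining singletons bijectively onto the other m−1 maximal points of B, sending {a,b} (if present) to the common image of {a} and {b}, and sending M, M∖{a}, M∖{b} (those present) to the bottom of B. -/

import Mathlib

open Set Function

variable {α β γ : Type*}

/-- `Mset x` is the set of maximal elements (of the ambient poset) lying above `x`. -/
def Mset [PartialOrder α] (x : α) : Set α := {y | IsMax y ∧ x ≤ y}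

/-- A pp-morphism: an order-preserving map `h` with `M(h x) = h[M x]` for all `x`. -/
def IsPP [PartialOrder α] [PartialOrder β] (h : α → β) : Prop :=
  Monotone h ∧ ∀ x, Mset (h x) = h '' Mset x

/-- The reverse-inclusion partial order on a family of subsets. -/
def revPO (p : Set α → Prop) : PartialOrder {S : Set α // p S} :=
  PartialOrder.lift (fun A => OrderDual.toDual (A : Set α))
    (fun A B h => Subtype.ext (by simpa using h))

/-- Membership in the reduced poset `P(M, F)`: the base `M`, the singletons of elements
of `M`, and the members of `F`. -/
def RMem (M : Set α) (F : Set (Set α)) (S : Set α) : Prop :=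
  S = M ∨ (∃ m ∈ M, S = {m}) ∨ S ∈ F

/-- The reduced poset `P(M, F)`, ordered by reverse inclusion. -/
def Red (M : Set α) (F : Set (Set α)) := {S : Set α // RMem M F S}

instance (M : Set α) (F : Set (Set α)) : PartialOrder (Red M F) := revPO _

/-- The bottom element `M` of the reduced poset `P(M, F)`. -/
def botElem (M : Set α) (F : Set (Set α)) : Red M F := ⟨M, Or.inl rfl⟩

/-- The singleton element `{x}` (for `x ∈ M`) of the reduced poset `P(M, F)`. -/
def singElem (M : Set α) (F : Set (Set α)) {x : α} (hx : x ∈ M) : Red M F :=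
  ⟨{x}, Or.inr (Or.inl ⟨x, hx, rfl⟩)⟩

/-- The poset `B_m` with a bottom element `none` and `m` pairwise incomparable
maximal elements `some i` above it. -/
def Bm (m : ℕ) := Option (Fin m)

instance (m : ℕ) : PartialOrder (Bm m) where
  le x y := x = y ∨ x = none
  le_refl x := Or.inl rfl
  le_trans x y z h₁ h₂ := by
    rcases h₁ with rfl | rfl
    · exact h₂
    · exact Or.inr rfl
  le_antisymm x y h₁ h₂ := by
    rcases h₁ with rfl | rfl
    · rfl
    · rcases h₂ with rfl | rfl <;> rfl

-- aux lemmas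
lemma bm_le {m : ℕ} (x y : Bm m) : x ≤ y ↔ x = y ∨ x = none := Iff.rfl

lemma bm_isMax {m : ℕ} (hm : 0 < m) (x : Bm m) : IsMax x ↔ x ≠ none := by
  constructor
  · intro h hx
    subst hx
    have h2 := h (b := show Bm m from some ⟨0, hm⟩) (Or.inr rfl)
    rcases h2 with h2 | h2 <;> cases h2
  · intro hx y hy
    rcases hy with rfl | rfl
    · exact le_refl _
    · exact absurd rfl hx

lemma bm_mset_none {m : ℕ} (hm : 0 < m) {x : Bm m} (hx : x = none) :
    Mset x = {y | y ≠ none} := by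
  ext y
  simp only [Mset, mem_setOf_eq, bm_isMax hm, hx]
  constructor
  · rintro ⟨h1, _⟩; exact h1
  · intro h1; exact ⟨h1, Or.inr rfl⟩

lemma bm_mset_some {m : ℕ} (hm : 0 < m) {x : Bm m} {i : Fin m} (hx : x = some i) :
    Mset x = {x} := by
  ext y
  simp only [Mset, mem_setOf_eq, bm_isMax hm, mem_singleton_iff]
  constructor
  · rintro ⟨hy, rfl | h⟩
    · rfl
    · rw [hx] at h; exact absurd h (fun h2 => by cases h2)
  · rintro rfl
    refine ⟨?_, Or.inl rfl⟩
    rw [hx]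
    exact fun h => by cases h

lemma red_le {M : Set α} {F : Set (Set α)} (X Y : Red M F) : X ≤ Y ↔ Y.1 ⊆ X.1 := Iff.rfl

lemma sing_choose {S : Set α} (hh : ∃ x : α, S = {x}) {c : α} (hc : S = {c}) :
    hh.choose = c := by
  subst hc
  exact (Set.singleton_eq_singleton_iff.mp hh.choose_spec).symm


/-- If `|M| = m + 1` (`m ≥ 2`), `a ≠ b` in `M`, and `F ⊆ { {a,b}, M∖{a}, M∖{b} }`, then
there is a surjective pp-morphism `P(M,F) → B_m` collapsing exactly `{a}` and `{b}`,
sending `M`, `M∖{a}`, `M∖{b}` to the bottom, and sending `{a,b}` to the image of `{a}`. -/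
theorem stmt14 (m : ℕ) (hm : 2 ≤ m) (M : Set α) (hM : M.Finite) (hMcard : M.ncard = m + 1)
    {a b : α} (ha : a ∈ M) (hb : b ∈ M) (hab : a ≠ b)
    (F : Set (Set α)) (hF : F ⊆ ({({a, b} : Set α), M \ {a}, M \ {b}} : Set (Set α))) :
    ∃ f : Red M F → Bm m,
      Function.Surjective f ∧ IsPP f ∧
      (∀ c (hc : c ∈ M), ∀ d (hd : d ∈ M),
        (f (singElem M F hc) = f (singElem M F hd) ↔ (c = d ∨ ({c, d} : Set α) = {a, b}))) ∧
      (∀ X : Red M F, f X = (none : Bm m) ↔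
        (X.1 = M ∨ X.1 = M \ {a} ∨ X.1 = M \ {b})) ∧
      (∀ h : ({a, b} : Set α) ∈ F,
        f ⟨{a, b}, Or.inr (Or.inr h)⟩ = f (singElem M F ha)) := by
  classical
  have hm0 : 0 < m := by omega
  -- cardinality facts
  have hMa_card : (M \ {a}).ncard = m := by
    rw [Set.ncard_diff_singleton_of_mem ha, hMcard]; omega
  have hMb_card : (M \ {b}).ncard = m := by
    rw [Set.ncard_diff_singleton_of_mem hb, hMcard]; omega
  have hMa_fin : (M \ {a}).Finite := hM.diff
  have hMb_fin : (M \ {b}).Finite := hM.diff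
  have hM_not_sing : ∀ x : α, M ≠ {x} := by
    intro x hx
    rw [hx, Set.ncard_singleton] at hMcard
    omega
  have hMa_not_sing : ∀ x : α, M \ {a} ≠ {x} := by
    intro x hx
    rw [hx, Set.ncard_singleton] at hMa_card
    omega
  have hMb_not_sing : ∀ x : α, M \ {b} ≠ {x} := by
    intro x hx
    rw [hx, Set.ncard_singleton] at hMb_card
    omega
  have hab_card : ({a, b} : Set α).ncard = 2 := Set.ncard_pair hab
  have hab_fin : ({a, b} : Set α).Finite := (Set.finite_singleton a).insert b |>.subset (by
    intro x hx; rcases hx with rfl | rfl <;> simp)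
  have hM_ne_ab : M ≠ ({a, b} : Set α) := by
    intro h
    rw [h, hab_card] at hMcard
    omega
  have hMa_ne_ab : M \ {a} ≠ ({a, b} : Set α) := by
    intro h
    have : a ∈ M \ {a} := h ▸ (by simp : a ∈ ({a, b} : Set α))
    simp at this
  have hMb_ne_ab : M \ {b} ≠ ({a, b} : Set α) := by
    intro h
    have : b ∈ M \ {b} := h ▸ (by simp : b ∈ ({a, b} : Set α))
    simp at this
  have hab_not_sing : ∀ x : α, ({a, b} : Set α) ≠ {x} := by
    intro x hx
    have hax : a = x := by
      have : a ∈ ({x} : Set α) := hx ▸ (by simp : a ∈ ({a, b} : Set α))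
      simpa using this
    have hbx : b = x := by
      have : b ∈ ({x} : Set α) := hx ▸ (by simp : b ∈ ({a, b} : Set α))
      simpa using this
    exact hab (hax.trans hbx.symm)
  -- the bijection
  have hamb : a ∈ M \ {b} := ⟨ha, by simp [hab]⟩
  have hbma : b ∈ M \ {a} := ⟨hb, by simp [Ne.symm hab]⟩
  have : Finite (M \ {b} : Set α) := hMb_fin
  have hcard' : Nat.card (M \ {b} : Set α) = m := by
    rw [← Nat.card_coe_set_eq] at hMb_card; exact hMb_card
  let e : (M \ {b} : Set α) ≃ Fin m := Finite.equivFinOfCardEq hcard'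
  let g : α → Fin m := fun x => if h : x ∈ M \ {b} then e ⟨x, h⟩ else e ⟨a, hamb⟩
  have hg_mem : ∀ x (h : x ∈ M \ {b}), g x = e ⟨x, h⟩ := fun x h => dif_pos h
  have hga : g a = e ⟨a, hamb⟩ := hg_mem a hamb
  have hgb : g b = e ⟨a, hamb⟩ := dif_neg (by simp)
  have hgab : g b = g a := by rw [hga, hgb]
  have hg_inj : ∀ x ∈ M \ {b}, ∀ y ∈ M \ {b}, g x = g y → x = y := by
    intro x hx y hy h
    rw [hg_mem x hx, hg_mem y hy] at h
    exact Subtype.ext_iff.mp (e.injective h)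
  have hg_surj : ∀ i : Fin m, ∃ c ∈ M \ {b}, g c = i := by
    intro i
    obtain ⟨⟨c, hc⟩, hci⟩ := e.surjective i
    exact ⟨c, hc, by rw [hg_mem c hc]; exact hci⟩
  have hg_surj' : ∀ i : Fin m, ∃ c ∈ M \ {a}, g c = i := by
    intro i
    obtain ⟨c, hc, hci⟩ := hg_surj i
    by_cases hca : c = a
    · exact ⟨b, hbma, by rw [hgab, ← hca]; exact hci⟩
    · exact ⟨c, ⟨hc.1, by simpa using hca⟩, hci⟩
  -- the map
  let f : Red M F → Bm m := fun X =>
    if X.1 = ({a, b} : Set α) then some (g a)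
    else if h : ∃ x : α, X.1 = {x} then some (g h.choose) else none
  -- values of f
  have hf_sing : ∀ (X : Red M F) (c : α), X.1 = {c} → f X = some (g c) := by
    intro X c hc
    have hne : X.1 ≠ ({a, b} : Set α) := by
      rw [hc]; exact fun h => hab_not_sing c h.symm
    have hex : ∃ x : α, X.1 = {x} := ⟨c, hc⟩
    refine (if_neg hne).trans ((dif_pos hex).trans ?_)
    rw [sing_choose hex hc]
  have hf_ab : ∀ (X : Red M F), X.1 = ({a, b} : Set α) → f X = some (g a) := by
    intro X hX
    exact if_pos hX
  have hf_none : ∀ (X : Red M F),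
      (X.1 = M ∨ X.1 = M \ {a} ∨ X.1 = M \ {b}) → f X = none := by
    intro X hX
    have hne : X.1 ≠ ({a, b} : Set α) := by
      rcases hX with h | h | h <;> rw [h]
      · exact hM_ne_ab
      · exact hMa_ne_ab
      · exact hMb_ne_ab
    have hnex : ¬ ∃ x : α, X.1 = {x} := by
      rintro ⟨x, hx⟩
      rcases hX with h | h | h <;> rw [h] at hx
      · exact hM_not_sing x hx
      · exact hMa_not_sing x hx
      · exact hMb_not_sing x hx
    exact (if_neg hne).trans (dif_neg hnex)
  -- shape analysis
  have hshape : ∀ X : Red M F, (∃ c ∈ M, X.1 = {c}) ∨ X.1 = ({a, b} : Set α) ∨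
      X.1 = M ∨ X.1 = M \ {a} ∨ X.1 = M \ {b} := by
    rintro ⟨S, hS⟩
    rcases hS with rfl | h | h
    · right; right; left; rfl
    · left; exact h
    · have := hF h
      simp only [Set.mem_insert_iff, Set.mem_singleton_iff] at this
      tauto
  -- nonemptiness
  have hne_all : ∀ X : Red M F, X.1.Nonempty := by
    intro X
    rcases hshape X with ⟨c, _, hc⟩ | h | h | h | h
    · rw [hc]; exact ⟨c, rfl⟩
    · rw [h]; exact ⟨a, by simp⟩
    · rw [h]; exact ⟨a, ha⟩
    · rw [h]; exact ⟨b, hbma⟩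
    · rw [h]; exact ⟨a, hamb⟩
  -- maximal elements of Red M F
  have hmax_red : ∀ X : Red M F, IsMax X ↔ ∃ c ∈ M, X.1 = {c} := by
    intro X
    constructor
    · intro hX
      rcases hshape X with h | h | h | h | h
      · exact h
      · exfalso
        have hle : X ≤ singElem M F ha := by
          rw [red_le]; simp only [singElem]; rw [h]; simp
        have := hX hle
        rw [red_le] at this
        simp only [singElem] at this
        rw [h] at this
        have hbmem : b ∈ ({a} : Set α) := this (by simp)
        have hba : b = a := by simpa using hbmem
        exact hab hba.symm
      · exfalso
        have hle : X ≤ singElem M F ha := by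
          rw [red_le]; simp only [singElem]; rw [h]; simp [ha]
        have := hX hle
        rw [red_le] at this
        simp only [singElem] at this
        rw [h] at this
        have hbmem : b ∈ ({a} : Set α) := this hb
        have hba : b = a := by simpa using hbmem
        exact hab hba.symm
      · exfalso
        have hle : X ≤ singElem M F hb := by
          rw [red_le]; simp only [singElem]; rw [h]; simp [hbma]
        have := hX hle
        rw [red_le] at this
        simp only [singElem] at this
        rw [h] at this
        have := Set.ncard_le_ncard this (Set.finite_singleton b)
        rw [hMa_card, Set.ncard_singleton] at this
        omega
      · exfalso
        have hle : X ≤ singElem M F ha := by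
          rw [red_le]; simp only [singElem]; rw [h]; simp [hamb]
        have := hX hle
        rw [red_le] at this
        simp only [singElem] at this
        rw [h] at this
        have := Set.ncard_le_ncard this (Set.finite_singleton a)
        rw [hMb_card, Set.ncard_singleton] at this
        omega
    · rintro ⟨c, hcM, hc⟩ Y hY
      rw [red_le] at hY ⊢
      rw [hc] at hY
      have := (Set.subset_singleton_iff_eq.mp hY).resolve_left
        (Set.nonempty_iff_ne_empty.mp (hne_all Y))
      rw [hc, this]
  -- Mset in Red M F
  have hmset_red : ∀ X : Red M F, Mset X = {Y : Red M F | ∃ c, c ∈ M ∧ c ∈ X.1 ∧ Y.1 = {c}} := by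
    intro X
    ext Y
    simp only [Mset, mem_setOf_eq, hmax_red, red_le]
    constructor
    · rintro ⟨⟨c, hcM, hc⟩, hsub⟩
      exact ⟨c, hcM, hsub (hc ▸ rfl), hc⟩
    · rintro ⟨c, hcM, hcX, hc⟩
      exact ⟨⟨c, hcM, hc⟩, by rw [hc]; simpa using hcX⟩
  -- image of Mset
  have himg : ∀ X : Red M F, f '' Mset X = (fun c => (some (g c) : Bm m)) '' (M ∩ X.1) := by
    intro X
    rw [hmset_red X]
    ext y
    constructor
    · rintro ⟨Y, ⟨c, hcM, hcX, hYc⟩, rfl⟩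
      exact ⟨c, ⟨hcM, hcX⟩, (hf_sing Y c hYc).symm⟩
    · rintro ⟨c, ⟨hcM, hcX⟩, rfl⟩
      exact ⟨singElem M F hcM, ⟨c, hcM, hcX, rfl⟩, hf_sing _ c rfl⟩
  refine ⟨f, ?_, ⟨?_, ?_⟩, ?_, ?_, ?_⟩
  · -- surjectivity
    rintro (_ | i)
    · exact ⟨botElem M F, hf_none _ (Or.inl rfl)⟩
    · obtain ⟨c, hc, hci⟩ := hg_surj i
      exact ⟨singElem M F hc.1, by rw [hf_sing _ c rfl, hci]⟩
  · -- monotone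
    intro X Y hXY
    rw [red_le] at hXY
    rcases hshape X with ⟨c, hcM, hc⟩ | hX | hX | hX | hX
    · -- X singleton: Y = X
      have : Y.1 = X.1 := by
        rw [hc] at hXY ⊢
        exact (Set.subset_singleton_iff_eq.mp hXY).resolve_left
          (Set.nonempty_iff_ne_empty.mp (hne_all Y))
      have : Y = X := Subtype.ext this
      rw [this]
    · -- X = {a,b}
      rw [hf_ab X hX]
      rw [hX] at hXY
      rcases hshape Y with ⟨d, hdM, hd⟩ | hY | hY | hY | hY
      · rw [hf_sing Y d hd]
        have hdab : d ∈ ({a, b} : Set α) := hXY (hd ▸ rfl)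
        rcases hdab with rfl | hdb
        · exact le_refl _
        · rw [mem_singleton_iff] at hdb
          rw [hdb, hgab]; exact le_refl _
      · rw [hf_ab Y hY]; exact le_refl _
      · exfalso
        rw [hY] at hXY
        have := Set.ncard_le_ncard hXY hab_fin
        rw [hMcard, hab_card] at this
        omega
      · exfalso
        rw [hY] at hXY
        have hsub : M \ {a} ⊆ {b} := by
          intro x hx
          have := hXY hx
          rcases this with rfl | h
          · exact absurd rfl hx.2
          · exact h
        have := Set.ncard_le_ncard hsub (Set.finite_singleton b)
        rw [hMa_card, Set.ncard_singleton] at this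
        omega
      · exfalso
        rw [hY] at hXY
        have hsub : M \ {b} ⊆ {a} := by
          intro x hx
          have := hXY hx
          rcases this with rfl | h
          · rfl
          · exact absurd h hx.2
        have := Set.ncard_le_ncard hsub (Set.finite_singleton a)
        rw [hMb_card, Set.ncard_singleton] at this
        omega
    all_goals (rw [hf_none X (by tauto)]; exact Or.inr rfl)
  · -- Mset condition
    intro X
    rw [himg X]
    rcases hshape X with ⟨c, hcM, hc⟩ | hX | hX | hX | hX
    · rw [bm_mset_some hm0 (hf_sing X c hc), hf_sing X c hc, hc]
      have : M ∩ {c} = {c} := by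
        ext x; simp only [mem_inter_iff, mem_singleton_iff, and_iff_right_iff_imp]
        rintro rfl; exact hcM
      rw [this]
      ext y
      change y = _ ↔ ∃ x, x = c ∧ _ = y
      constructor
      · rintro rfl; exact ⟨c, rfl, rfl⟩
      · rintro ⟨x, rfl, rfl⟩; rfl
    · rw [bm_mset_some hm0 (hf_ab X hX), hf_ab X hX, hX]
      have hint : M ∩ {a, b} = {a, b} := by
        ext x; simp only [mem_inter_iff, and_iff_right_iff_imp]
        rintro (rfl | rfl); exacts [ha, hb]
      rw [hint]
      ext y
      change y = _ ↔ ∃ x, x ∈ ({a, b} : Set α) ∧ _ = y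
      constructor
      · rintro rfl; exact ⟨a, Or.inl rfl, rfl⟩
      · rintro ⟨x, (rfl | hx), rfl⟩
        · rfl
        · rw [mem_singleton_iff] at hx; rw [hx, hgab]
    · rw [bm_mset_none hm0 (hf_none X (Or.inl hX)), hX, Set.inter_self]
      ext y
      simp only [mem_setOf_eq, mem_image]
      constructor
      · intro hy
        match y, hy with
        | some i, _ =>
          obtain ⟨c, hc, hci⟩ := hg_surj i
          exact ⟨c, hc.1, by rw [hci]⟩
      · rintro ⟨x, _, rfl⟩
        exact fun h => by cases h
    · rw [bm_mset_none hm0 (hf_none X (Or.inr (Or.inl hX))), hX,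
        Set.inter_eq_self_of_subset_right Set.diff_subset]
      ext y
      simp only [mem_setOf_eq, mem_image]
      constructor
      · intro hy
        match y, hy with
        | some i, _ =>
          obtain ⟨c, hc, hci⟩ := hg_surj' i
          exact ⟨c, hc, by rw [hci]⟩
      · rintro ⟨x, _, rfl⟩
        exact fun h => by cases h
    · rw [bm_mset_none hm0 (hf_none X (Or.inr (Or.inr hX))), hX,
        Set.inter_eq_self_of_subset_right Set.diff_subset]
      ext y
      simp only [mem_setOf_eq, mem_image]
      constructor
      · intro hy
        match y, hy with
        | some i, _ =>
          obtain ⟨c, hc, hci⟩ := hg_surj i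
          exact ⟨c, hc, by rw [hci]⟩
      · rintro ⟨x, _, rfl⟩
        exact fun h => by cases h
  · -- singleton collapse characterization
    intro c hc d hd
    rw [hf_sing _ c rfl, hf_sing _ d rfl]; change (some (g c) : Option (Fin m)) = some (g d) ↔ _; rw [Option.some_inj]
    by_cases hcb : c = b
    · by_cases hdb : d = b
      · rw [hcb, hdb]; simp
      · rw [hcb, hgab, hg_mem d ⟨hd, hdb⟩, hga]
        constructor
        · intro h
          have had : a = d := congrArg Subtype.val (e.injective h)
          right
          rw [← had]
          exact Set.pair_comm b a
        · rintro (h | h)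
          · exact absurd h.symm hdb
          · have hd' : d ∈ ({a, b} : Set α) := h ▸ (by simp : d ∈ ({b, d} : Set α))
            rcases hd' with rfl | hd'
            · rfl
            · rw [mem_singleton_iff] at hd'; exact absurd hd' hdb
    · by_cases hdb : d = b
      · rw [hdb, hgab, hg_mem c ⟨hc, hcb⟩, hga]
        constructor
        · intro h
          have hca : c = a := congrArg Subtype.val (e.injective h)
          right
          rw [hca]
        · rintro (h | h)
          · exact absurd h hcb
          · have hc' : c ∈ ({a, b} : Set α) := h ▸ (by simp : c ∈ ({c, b} : Set α))
            rcases hc' with rfl | hc'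
            · rfl
            · rw [mem_singleton_iff] at hc'; exact absurd hc' hcb
      · rw [hg_mem c ⟨hc, hcb⟩, hg_mem d ⟨hd, hdb⟩]
        constructor
        · intro h
          exact Or.inl (congrArg Subtype.val (e.injective h))
        · rintro (rfl | h)
          · rfl
          · exfalso
            have hbmem : b ∈ ({c, d} : Set α) := h ▸ (by simp : b ∈ ({a, b} : Set α))
            rcases hbmem with rfl | hbmem
            · exact hcb rfl
            · rw [mem_singleton_iff] at hbmem; exact hdb hbmem.symm
  · -- f X = none characterization
    intro X
    constructor
    · intro hfX
      rcases hshape X with ⟨c, hcM, hc⟩ | hX | hX | hX | hX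
      · rw [hf_sing X c hc] at hfX; cases hfX
      · rw [hf_ab X hX] at hfX; cases hfX
      all_goals tauto
    · exact hf_none X
  · -- {a,b} goes to image of {a}
    intro h
    exact (hf_ab ⟨{a, b}, Or.inr (Or.inr h)⟩ rfl).trans (hf_sing (singElem M F ha) a rfl).symm
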